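/- Fix an integer k ≥ 1 and for each natural number p set S_p := Σ_{a,b ∈ {l,r}^k} ((M_k^∥)^p)_{a,b}. Then in the ring ℤ[[t]] of formal power series, (1 + Σ_{p≥0} S_p t^{p+1}) · (Σ_{j=0}^{k−1} (−1)^j A(k,j) t^{j+1}) = t·(1+t)^{k+1}; equivalently, the generating series R_k(t) = 1 + Σ_{p≥0} S_p t^{p+1} satisfies R_k(t) · E_k(−t) = −t·(1+t)^{k+1}. -/

import Mathlib

/-- The number of letters `r` in a word of `{l, r}^k`, encoding letters `l`
and `r` as `false` and `true` respectively. -/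
def rcount {k : ℕ} (a : Fin k → Bool) : ℕ :=
  (Finset.univ.filter fun m => a m = true).card

/-- The parallel transition matrix `M_k^∥`: the entry at `(a, b)` is `1` if
there is a position `m` with `a_m = l` and `b_m = r`, and `0` otherwise. -/
def Mpar (k : ℕ) : Matrix (Fin k → Bool) (Fin k → Bool) ℕ :=
  Matrix.of fun a b => if ∃ m, a m = false ∧ b m = true then 1 else 0

/-- The series transition matrix `M_k^⊢`: the entry at `(a, b)` is `1` if
there is a (1-indexed) position `m > |a|_r` with `b_m = r`, and `0`
otherwise. -/
def Mser (k : ℕ) : Matrix (Fin k → Bool) (Fin k → Bool) ℕ :=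
  Matrix.of fun a b => if ∃ m : Fin k, rcount a ≤ (m : ℕ) ∧ b m = true then 1 else 0

/-- The `(k+1) × (k+1)` matrix `N_k` with entries
`(N_k)_{i,j} = binom k j - binom i j` for `0 ≤ i, j ≤ k`. -/
def Nmat (k : ℕ) : Matrix (Fin (k + 1)) (Fin (k + 1)) ℕ :=
  Matrix.of fun i j => Nat.choose k (j : ℕ) - Nat.choose (i : ℕ) (j : ℕ)

/-- The number of descents of a permutation `σ` of `Fin k`, i.e. the number of
(0-indexed) positions `i` with `i + 1 < k` and `σ i > σ (i + 1)`. -/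
noncomputable def descentCount {k : ℕ} (σ : Equiv.Perm (Fin k)) : ℕ :=
  Nat.card {i : Fin k // ∃ h : (i : ℕ) + 1 < k, σ ⟨(i : ℕ) + 1, h⟩ < σ i}

/-- The Eulerian number `A(k, j)`: the number of permutations of `{1, …, k}`
having exactly `j` descents. -/
noncomputable def eulerian (k j : ℕ) : ℕ :=
  Nat.card {σ : Equiv.Perm (Fin k) // descentCount σ = j}

open Finset PowerSeries

namespace GS

section MatrixPart
variable (k : ℕ)

def Jm : Matrix (Fin k → Bool) (Fin k → Bool) ℤ := Matrix.of fun _ _ => 1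

def Zm : Matrix (Fin k → Bool) (Fin k → Bool) ℤ :=
  Matrix.of fun a b => if ∀ m, b m = true → a m = true then 1 else 0

/-- entries of `z^q` for the 2×2 building block. -/
def zq (q : ℕ) (x y : Bool) : ℤ :=
  if x then (if y then 1 else (q : ℤ)) else (if y then 0 else 1)

lemma Zm_eq : Zm k = Matrix.of fun a b => ∏ m, zq 1 (a m) (b m) := by
  ext a b
  simp only [Zm, Matrix.of_apply]
  rw [show (∏ m, zq 1 (a m) (b m)) = ∏ m, (if (b m = true → a m = true) then (1:ℤ) else 0) by
    refine Finset.prod_congr rfl fun m _ => ?_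
    cases a m <;> cases b m <;> simp [zq]]
  rw [Finset.prod_boole]
  simp

lemma zq_mul (q : ℕ) (x y : Bool) :
    ∑ c : Bool, zq q x c * zq 1 c y = zq (q + 1) x y := by
  cases x <;> cases y <;> simp [zq] <;> push_cast <;> ring

lemma Zm_pow (q : ℕ) : (Zm k) ^ q = Matrix.of fun a b => ∏ m, zq q (a m) (b m) := by
  induction q with
  | zero =>
    ext a b
    simp only [pow_zero, Matrix.one_apply, Matrix.of_apply]
    rw [show (∏ m, zq 0 (a m) (b m)) = ∏ m, (if a m = b m then (1:ℤ) else 0) by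
      refine Finset.prod_congr rfl fun m _ => ?_
      cases a m <;> cases b m <;> simp [zq]]
    rw [Finset.prod_boole]
    simp [funext_iff, eq_comm]
  | succ q ih =>
    ext a b
    rw [pow_succ, Matrix.mul_apply]
    rw [ih]
    rw [Zm_eq]
    simp only [Matrix.of_apply]
    rw [show ∑ c : Fin k → Bool, (∏ m, zq q (a m) (c m)) * ∏ m, zq 1 (c m) (b m)
        = ∑ c : Fin k → Bool, ∏ m, (zq q (a m) (c m) * zq 1 (c m) (b m)) by
      exact Finset.sum_congr rfl fun c _ => (Finset.prod_mul_distrib).symm]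
    rw [← Fintype.prod_sum fun m x => zq q (a m) x * zq 1 x (b m)]
    exact Finset.prod_congr rfl fun m _ => zq_mul q (a m) (b m)

lemma sum_entries_Zm_pow (q : ℕ) :
    ∑ a, ∑ b, ((Zm k) ^ q) a b = ((q : ℤ) + 2) ^ k := by
  rw [Zm_pow]
  simp only [Matrix.of_apply]
  have h1 : ∀ a : Fin k → Bool, (∑ b : Fin k → Bool, ∏ m, zq q (a m) (b m))
      = ∏ m, (if a m then (q : ℤ) + 1 else 1) := by
    intro a
    rw [← Fintype.prod_sum fun m x => zq q (a m) x]
    refine Finset.prod_congr rfl fun m _ => ?_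
    cases a m <;> simp [zq] <;> ring
  rw [Finset.sum_congr rfl fun a _ => h1 a]
  rw [← Fintype.prod_sum fun (m : Fin k) (x : Bool) => (if x then (q : ℤ) + 1 else 1)]
  simp
  ring_nf

lemma Mpar_cast : (Mpar k).map (Nat.cast : ℕ → ℤ) = Jm k - Zm k := by
  ext a b
  simp only [Mpar, Jm, Zm, Matrix.map_apply, Matrix.of_apply, Matrix.sub_apply]
  by_cases h : ∀ m, b m = true → a m = true
  · have hne : ¬ ∃ m, a m = false ∧ b m = true := by
      rintro ⟨m, ha, hb⟩
      rw [h m hb] at ha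
      exact Bool.noConfusion ha
    rw [if_neg hne, if_pos h]
    simp
  · have he : ∃ m, a m = false ∧ b m = true := by
      push_neg at h
      obtain ⟨m, hb, ha⟩ := h
      exact ⟨m, by simp [ha], hb⟩
    rw [if_pos he, if_neg h]
    simp

def u (p : ℕ) : ℤ := ∑ a, ∑ b, ((Jm k - Zm k) ^ p) a b

def Wt (p q : ℕ) : ℤ := ∑ a, ∑ b, ((Jm k - Zm k) ^ p * (Zm k) ^ q) a b

lemma cast_sum_pow (p : ℕ) :
    ((∑ a, ∑ b, (Mpar k ^ p) a b : ℕ) : ℤ) = u k p := by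
  have h : ((Nat.castRingHom ℤ).mapMatrix (Mpar k ^ p)) = (Jm k - Zm k) ^ p := by
    rw [map_pow]
    congr 1
    exact Mpar_cast k
  have h2 := congrArg (fun M : Matrix (Fin k → Bool) (Fin k → Bool) ℤ => ∑ a, ∑ b, M a b) h
  rw [u, ← h2]
  push_cast
  rfl

lemma sum_entries_mul_J_mul (A B : Matrix (Fin k → Bool) (Fin k → Bool) ℤ) :
    ∑ a, ∑ b, (A * Jm k * B) a b = (∑ a, ∑ b, A a b) * (∑ a, ∑ b, B a b) := by
  have h : ∀ a b, (A * Jm k * B) a b = (∑ c, A a c) * (∑ d, B d b) := by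
    intro a b
    rw [Matrix.mul_apply]
    have h1 : ∀ d, (A * Jm k) a d = ∑ c, A a c := by
      intro d
      rw [Matrix.mul_apply]
      simp [Jm]
    rw [Finset.sum_congr rfl fun d _ => by rw [h1 d]]
    rw [← Finset.mul_sum]
  simp only [h]
  rw [show (∑ a, ∑ b, (∑ c, A a c) * (∑ d, B d b))
      = (∑ a, ∑ c, A a c) * (∑ b, ∑ d, B d b) by rw [Finset.sum_mul_sum]]
  congr 1
  exact Finset.sum_comm

lemma Wt_rec (p q : ℕ) :
    Wt k (p + 1) q = u k p * ((q : ℤ) + 2) ^ k - Wt k p (q + 1) := by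
  have hm : (Jm k - Zm k) ^ (p + 1) * (Zm k) ^ q
      = (Jm k - Zm k) ^ p * Jm k * (Zm k) ^ q
        - (Jm k - Zm k) ^ p * (Zm k) ^ (q + 1) := by
    rw [pow_succ, pow_succ']
    noncomm_ring
  rw [Wt, hm]
  simp only [Matrix.sub_apply, Finset.sum_sub_distrib]
  rw [sum_entries_mul_J_mul, sum_entries_Zm_pow]
  rfl

lemma Wt_zero (q : ℕ) : Wt k 0 q = ((q : ℤ) + 2) ^ k := by
  rw [Wt]
  simp only [pow_zero, one_mul]
  exact sum_entries_Zm_pow k q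

lemma Wt_closed (p : ℕ) : ∀ q : ℕ, Wt k p q
    = (-1) ^ p * ((p : ℤ) + q + 2) ^ k
      + ∑ i ∈ Finset.range p, (-1) ^ i * ((q : ℤ) + 2 + i) ^ k * u k (p - 1 - i) := by
  induction p with
  | zero => intro q; simp [Wt_zero]
  | succ p ih =>
    intro q
    rw [Wt_rec, ih (q + 1)]
    rw [Finset.sum_range_succ']
    have e0 : (-1 : ℤ) ^ 0 * ((q : ℤ) + 2 + (0:ℕ)) ^ k * u k (p + 1 - 1 - 0)
        = u k p * ((q : ℤ) + 2) ^ k := by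
      rw [show p + 1 - 1 - 0 = p from rfl]
      push_cast; ring
    rw [e0]
    have e1 : ∀ i ∈ Finset.range p,
        (-1 : ℤ) ^ (i + 1) * ((q : ℤ) + 2 + (↑(i + 1) : ℤ)) ^ k * u k (p + 1 - 1 - (i + 1))
        = -((-1) ^ i * (((q:ℤ) + 1) + 2 + i) ^ k * u k (p - 1 - i)) := by
      intro i _
      have : p + 1 - 1 - (i + 1) = p - 1 - i := by omega
      rw [this]
      push_cast
      ring
    rw [Finset.sum_congr rfl e1]
    rw [Finset.sum_neg_distrib]
    have : ((p : ℤ) + 1 + q + 2) = ((p : ℤ) + (q + 1) + 2) := by ring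
    push_cast
    ring
  
lemma star (m : ℕ) : u k m
    = (-1) ^ m * ((m : ℤ) + 2) ^ k
      + ∑ i ∈ Finset.range m, (-1) ^ i * ((i : ℤ) + 2) ^ k * u k (m - 1 - i) := by
  have h : u k m = Wt k m 0 := by
    rw [Wt, u]
    simp
  rw [h, Wt_closed]
  have h2 : ∀ i ∈ Finset.range m, (-1:ℤ)^i * (((0:ℕ):ℤ)+2+(i:ℤ))^k * u k (m-1-i)
      = (-1)^i * ((i:ℤ)+2)^k * u k (m-1-i) := fun i _ => by push_cast; ring_nf
  rw [Finset.sum_congr rfl h2]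
  push_cast
  ring_nf

noncomputable def Gs : PowerSeries ℤ := PowerSeries.mk fun n => (-1) ^ n * ((n : ℤ) + 1) ^ k

noncomputable def Rs : PowerSeries ℤ :=
  (1 : PowerSeries ℤ) +
    PowerSeries.mk fun m =>
      if m = 0 then 0 else ((∑ a, ∑ b, (Mpar k ^ (m - 1)) a b : ℕ) : ℤ)

lemma coeff_Rs (p : ℕ) :
    (PowerSeries.coeff p) (Rs k) = if p = 0 then 1 else u k (p - 1) := by
  rw [Rs, map_add, PowerSeries.coeff_one, PowerSeries.coeff_mk]
  rcases p with _ | p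
  · simp
  · simp only [Nat.succ_ne_zero, if_false, zero_add, Nat.add_sub_cancel]
    exact cast_sum_pow k p

lemma R_mul_G : Rs k * Gs k = 1 := by
  ext n
  rw [PowerSeries.coeff_mul, Finset.Nat.sum_antidiagonal_eq_sum_range_succ_mk]
  rcases n with _ | m
  · simp [coeff_Rs, Gs]
  · rw [Finset.sum_range_succ']
    have h0 : (PowerSeries.coeff 0) (Rs k) * (PowerSeries.coeff (m + 1 - 0)) (Gs k)
        = (-1) ^ (m + 1) * ((m : ℤ) + 2) ^ k := by
      rw [coeff_Rs]
      simp [Gs]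
      push_cast
      ring
    rw [h0]
    have h1 : ∀ i ∈ Finset.range (m + 1),
        (PowerSeries.coeff (i + 1)) (Rs k) * (PowerSeries.coeff (m + 1 - (i + 1))) (Gs k)
        = u k i * ((-1) ^ (m - i) * (((m - i : ℕ) : ℤ) + 1) ^ k) := by
      intro i _
      rw [coeff_Rs]
      simp [Gs]
    rw [Finset.sum_congr rfl h1]
    rw [Finset.sum_range_succ]
    have htop : u k m * ((-1) ^ (m - m) * (((m - m : ℕ) : ℤ) + 1) ^ k) = u k m := by
      simp
    rw [htop]
    rw [← Finset.sum_range_reflect]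
    have h2 : ∀ j ∈ Finset.range m,
        u k (m - 1 - j) * ((-1) ^ (m - (m - 1 - j)) * (((m - (m - 1 - j) : ℕ) : ℤ) + 1) ^ k)
        = -((-1) ^ j * ((j : ℤ) + 2) ^ k * u k (m - 1 - j)) := by
      intro j hj
      rw [Finset.mem_range] at hj
      have e : m - (m - 1 - j) = j + 1 := by omega
      rw [e]
      push_cast
      ring
    rw [Finset.sum_congr rfl h2, Finset.sum_neg_distrib]
    have hp : (-1:ℤ)^(m+1) = -(-1)^m := by ring
    rw [hp]
    rw [PowerSeries.coeff_one, if_neg (by omega : ¬ m + 1 = 0)]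
    linarith [star k m]

end MatrixPart

lemma strictMono_iff_consec {α : Type*} [Preorder α] {k : ℕ} (g : Fin k → α) :
    StrictMono g ↔ ∀ (i : ℕ) (h : i + 1 < k), g ⟨i, by omega⟩ < g ⟨i + 1, h⟩ := by
  constructor
  · intro hg i h
    exact hg (by simp [Fin.lt_def])
  · intro H
    have key : ∀ (j i : ℕ) (hj : j < k) (hi : i < k), i < j → g ⟨i, hi⟩ < g ⟨j, hj⟩ := by
      intro j
      induction j with
      | zero => intro i hj hi h; omega
      | succ j ih =>
        intro i hj hi h
        rcases Nat.lt_succ_iff_lt_or_eq.mp h with h' | rfl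
        · exact (ih i (by omega) hi h').trans (H j hj)
        · exact H i hj
    intro a b hab
    have := key b.1 a.1 b.2 a.2 hab
    simpa using this

def strictMonoFinsetEquiv (k M : ℕ) :
    {z : Fin k → Fin M // StrictMono z} ≃ {s : Finset (Fin M) // s.card = k} where
  toFun z := ⟨Finset.univ.map ⟨z.1, z.2.injective⟩, by simp⟩
  invFun s := ⟨s.1.orderEmbOfFin s.2, (s.1.orderEmbOfFin s.2).strictMono⟩
  left_inv z := by
    apply Subtype.ext
    exact (Finset.orderEmbOfFin_unique _ (fun x => by simp) z.2).symm
  right_inv s := by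
    apply Subtype.ext
    ext x
    simp only [Finset.mem_map, Finset.mem_univ, true_and, Function.Embedding.coeFn_mk]
    constructor
    · rintro ⟨i, rfl⟩
      exact Finset.orderEmbOfFin_mem _ _ _
    · intro hx
      have := Finset.range_orderEmbOfFin s.1 s.2
      have hx' : x ∈ Set.range (s.1.orderEmbOfFin s.2) := by rw [this]; exact hx
      obtain ⟨i, hi⟩ := hx'
      exact ⟨i, hi⟩

lemma card_strictMono (k M : ℕ) :
    Nat.card {z : Fin k → Fin M // StrictMono z} = M.choose k := by
  rw [Nat.card_congr (strictMonoFinsetEquiv k M), Nat.card_eq_fintype_card,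
    Fintype.card_finset_len, Fintype.card_fin]

lemma sort_eq_iff {k n : ℕ} (σ : Equiv.Perm (Fin k)) (f : Fin k → Fin (n + 1)) :
    Tuple.sort f = σ ↔ ∀ (i : ℕ) (h : i + 1 < k),
      f (σ ⟨i, by omega⟩) < f (σ ⟨i + 1, h⟩) ∨
        (f (σ ⟨i, by omega⟩) = f (σ ⟨i + 1, h⟩) ∧ σ ⟨i, by omega⟩ < σ ⟨i + 1, h⟩) := by
  rw [eq_comm, Tuple.eq_sort_iff', strictMono_iff_consec]
  refine forall_congr' fun i => ?_
  refine forall_congr' fun h => ?_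
  show (⟨(f (σ ⟨i, by omega⟩), σ ⟨i, by omega⟩), _⟩ : Tuple.graph f)
      < ⟨(f (σ ⟨i+1, h⟩), σ ⟨i+1, h⟩), _⟩ ↔ _
  show toLex (f (σ ⟨i, by omega⟩), σ ⟨i, by omega⟩) < toLex (f (σ ⟨i+1, h⟩), σ ⟨i+1, h⟩) ↔ _
  exact Prod.Lex.toLex_lt_toLex

open scoped Classical

section Worpitzky
variable {k : ℕ}

/-- descent at `m`. -/
def desc (σ : Equiv.Perm (Fin k)) (m : Fin k) : Prop :=
  ∃ h : (m : ℕ) + 1 < k, σ ⟨(m : ℕ) + 1, h⟩ < σ m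

/-- non-descent (internal position, not a descent). -/
def nd (σ : Equiv.Perm (Fin k)) (m : Fin k) : Prop := (m : ℕ) + 1 < k ∧ ¬ desc σ m

noncomputable def Ncnt (σ : Equiv.Perm (Fin k)) : ℕ := (univ.filter (nd σ)).card

noncomputable def cnt (σ : Equiv.Perm (Fin k)) (i : ℕ) : ℕ :=
  (univ.filter fun m => nd σ m ∧ (m : ℕ) < i).card

lemma cnt_le_N (σ : Equiv.Perm (Fin k)) (i : ℕ) : cnt σ i ≤ Ncnt σ := by
  refine Finset.card_le_card fun m hm => ?_
  simp only [Finset.mem_filter] at hm ⊢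
  exact ⟨hm.1, hm.2.1⟩

lemma cnt_le_self (σ : Equiv.Perm (Fin k)) (i : ℕ) : cnt σ i ≤ i := by
  have h : (univ.filter fun m : Fin k => nd σ m ∧ (m : ℕ) < i).card
      ≤ (Finset.range i).card :=
    Finset.card_le_card_of_injOn (fun m : Fin k => (m : ℕ))
      (fun m hm => by
        simp only [Finset.coe_filter, Set.mem_setOf_eq, Finset.mem_filter] at hm
        simpa using hm.2.2)
      (fun a _ b _ hab => Fin.ext hab)
  simpa [cnt] using h

lemma cnt_succ (σ : Equiv.Perm (Fin k)) (i : ℕ) (hi : i < k) :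
    cnt σ (i + 1) = cnt σ i + (if nd σ ⟨i, hi⟩ then 1 else 0) := by
  rw [cnt, cnt]
  have hsplit : (univ.filter fun m : Fin k => nd σ m ∧ (m : ℕ) < i + 1)
      = (univ.filter fun m : Fin k => nd σ m ∧ (m : ℕ) < i)
        ∪ (univ.filter fun m : Fin k => nd σ m ∧ m = ⟨i, hi⟩) := by
    ext m
    simp only [Finset.mem_union, Finset.mem_filter, Finset.mem_univ, true_and]
    constructor
    · rintro ⟨h1, h2⟩
      rcases Nat.lt_succ_iff_lt_or_eq.mp h2 with h3 | h3
      · exact Or.inl ⟨h1, h3⟩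
      · exact Or.inr ⟨h1, Fin.ext h3⟩
    · rintro (⟨h1, h2⟩ | ⟨h1, rfl⟩)
      · exact ⟨h1, by omega⟩
      · exact ⟨h1, by simpa using Nat.lt_succ_self i⟩
  rw [hsplit, Finset.card_union_of_disjoint]
  · congr 1
    by_cases hnd : nd σ ⟨i, hi⟩
    · rw [if_pos hnd]
      rw [show (univ.filter fun m : Fin k => nd σ m ∧ m = ⟨i, hi⟩) = {⟨i, hi⟩} by
        ext m
        simp only [Finset.mem_filter, Finset.mem_univ, true_and, Finset.mem_singleton]
        constructor
        · rintro ⟨_, rfl⟩; rfl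
        · rintro rfl; exact ⟨hnd, rfl⟩]
      simp
    · rw [if_neg hnd]
      rw [show (univ.filter fun m : Fin k => nd σ m ∧ m = ⟨i, hi⟩) = ∅ by
        ext m
        simp only [Finset.mem_filter, Finset.mem_univ, true_and, Finset.notMem_empty,
          iff_false, not_and]
        rintro h1 rfl; exact hnd h1]
      simp
  · rw [Finset.disjoint_left]
    intro m hm hm'
    simp only [Finset.mem_filter] at hm hm'
    rcases hm'.2.2 with rfl
    exact absurd hm.2.2 (by simp)

lemma nd_lt {σ : Equiv.Perm (Fin k)} {m : Fin k} (h : nd σ m) : (m : ℕ) < k - 1 := by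
  have := h.1; omega

lemma cnt_top (σ : Equiv.Perm (Fin k)) : cnt σ (k - 1) = Ncnt σ := by
  rw [cnt, Ncnt]
  congr 1
  ext m
  simp only [Finset.mem_filter, Finset.mem_univ, true_and, and_iff_left_iff_imp]
  exact nd_lt

lemma cnt_gap (σ : Equiv.Perm (Fin k)) (i : ℕ) :
    Ncnt σ ≤ cnt σ i + ((k - 1) - i) := by
  rw [← cnt_top σ]
  have hsub : (univ.filter fun m : Fin k => nd σ m ∧ (m : ℕ) < k - 1)
      ⊆ (univ.filter fun m : Fin k => nd σ m ∧ (m : ℕ) < i)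
        ∪ (univ.filter fun m : Fin k => nd σ m ∧ i ≤ (m : ℕ)) := by
    intro m hm
    simp only [Finset.mem_union, Finset.mem_filter, Finset.mem_univ, true_and] at hm ⊢
    rcases lt_or_ge (m : ℕ) i with h | h
    · exact Or.inl ⟨hm.1, h⟩
    · exact Or.inr ⟨hm.1, h⟩
  have hb : (univ.filter fun m : Fin k => nd σ m ∧ i ≤ (m : ℕ)).card ≤ (k - 1) - i := by
    have h : (univ.filter fun m : Fin k => nd σ m ∧ i ≤ (m : ℕ)).card
        ≤ (Finset.Ico i (k - 1)).card :=
      Finset.card_le_card_of_injOn (fun m : Fin k => (m : ℕ))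
        (fun m hm => by
          simp only [Finset.coe_filter, Set.mem_setOf_eq, Finset.mem_filter] at hm
          simp only [Finset.coe_Ico, Set.mem_Ico, Finset.mem_Ico]
          exact ⟨hm.2.2, nd_lt hm.2.1⟩)
        (fun a _ b _ hab => Fin.ext hab)
    simpa [Nat.card_Ico] using h
  calc (univ.filter fun m : Fin k => nd σ m ∧ (m : ℕ) < k - 1).card
      ≤ _ := Finset.card_le_card hsub
    _ ≤ _ := Finset.card_union_le _ _
    _ ≤ cnt σ i + ((k - 1) - i) := by rw [cnt]; omega

variable {n : ℕ}

noncomputable def zfun (σ : Equiv.Perm (Fin k)) (f : Fin k → Fin (n + 1)) : Fin k → Fin (n + 1 + Ncnt σ) :=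
  fun i => ⟨(f (σ i) : ℕ) + cnt σ (i : ℕ), by
    have h1 := (f (σ i)).isLt
    have h2 := cnt_le_N σ (i : ℕ)
    omega⟩

lemma zfun_strictMono (σ : Equiv.Perm (Fin k)) (f : Fin k → Fin (n + 1))
    (hf : Tuple.sort f = σ) : StrictMono (zfun σ f) := by
  rw [strictMono_iff_consec]
  intro i h
  rw [sort_eq_iff] at hf
  have hfi := hf i h
  have hc := cnt_succ σ i (by omega)
  simp only [zfun, Fin.lt_def, Fin.val_mk]
  by_cases hnd : nd σ ⟨i, by omega⟩
  · rw [hc, if_pos hnd]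
    rcases hfi with hlt | ⟨heq, _⟩
    · rw [Fin.lt_def] at hlt; omega
    · rw [Fin.ext_iff] at heq; omega
  · have hdesc : desc σ ⟨i, by omega⟩ := by
      rcases not_and_or.mp hnd with hA | hB
      · exact absurd (by simpa using h) hA
      · exact not_not.mp hB
    rcases hfi with hlt | ⟨heq, hσ⟩
    · rw [hc, if_neg hnd]
      rw [Fin.lt_def] at hlt
      omega
    · obtain ⟨h', hlt'⟩ := hdesc
      exact absurd hσ (lt_asymm hlt')

lemma z_le_of_strict {M : ℕ} (z : Fin k → Fin M) (hz : StrictMono z) :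
    ∀ (v : ℕ) (hv : v < k), v ≤ (z ⟨v, hv⟩ : ℕ) := by
  intro v
  induction v with
  | zero => intro hv; exact Nat.zero_le _
  | succ v ih =>
    intro hv
    have h1 := hz (show (⟨v, by omega⟩ : Fin k) < ⟨v + 1, hv⟩ by
      rw [Fin.lt_def]; exact Nat.lt_succ_self v)
    rw [Fin.lt_def] at h1
    have h2 := ih (by omega)
    omega

lemma cl (σ : Equiv.Perm (Fin k)) {M : ℕ} (z : Fin k → Fin M) (hz : StrictMono z) :
    ∀ (a b : Fin k), a ≤ b → cnt σ (b : ℕ) + (z a : ℕ) ≤ cnt σ (a : ℕ) + (z b : ℕ) := by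
  have key : ∀ (d : ℕ) (a b : Fin k), (b : ℕ) = (a : ℕ) + d →
      cnt σ (b : ℕ) + (z a : ℕ) ≤ cnt σ (a : ℕ) + (z b : ℕ) := by
    intro d
    induction d with
    | zero =>
      intro a b hb
      have : a = b := Fin.ext (by omega)
      subst this
      exact le_refl _
    | succ d ih =>
      intro a b hb
      have hb' : (a : ℕ) + d < k := by have := b.2; omega
      set b' : Fin k := ⟨(a : ℕ) + d, hb'⟩ with hb'def
      have h1 := ih a b' rfl
      have h3 := hz (show b' < b by rw [Fin.lt_def]; simp only [hb'def, Fin.val_mk]; omega)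
      rw [Fin.lt_def] at h3
      have h2 := cnt_succ σ ((a : ℕ) + d) hb'
      have h4 : cnt σ (b : ℕ) = cnt σ ((a : ℕ) + d + 1) := by rw [hb, ← Nat.add_assoc]
      have h5 : (b' : ℕ) = (a : ℕ) + d := rfl
      rw [h5] at h1
      rw [h4]
      split_ifs at h2 <;> omega
  intro a b hab
  exact key ((b : ℕ) - (a : ℕ)) a b (by rw [Fin.le_def] at hab; omega)

lemma ysub_le (σ : Equiv.Perm (Fin k)) (hk : 0 < k) (z : Fin k → Fin (n + 1 + Ncnt σ))
    (hz : StrictMono z) (i : Fin k) : (z i : ℕ) - cnt σ (i : ℕ) ≤ n := by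
  have hkk : k - 1 < k := by omega
  set T : Fin k := ⟨k - 1, hkk⟩ with hT
  have h := cl σ z hz i T (by rw [Fin.le_def]; simp only [hT, Fin.val_mk]; have := i.2; omega)
  have hTv : (T : ℕ) = k - 1 := rfl
  rw [hTv, cnt_top] at h
  have h2 := T.isLt
  have h3 := (z T).isLt
  omega

noncomputable def yfun (σ : Equiv.Perm (Fin k)) (hk : 0 < k) (z : Fin k → Fin (n + 1 + Ncnt σ))
    (hz : StrictMono z) : Fin k → Fin (n + 1) :=
  fun i => ⟨(z i : ℕ) - cnt σ (i : ℕ), by have := ysub_le σ hk z hz i; omega⟩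

lemma yfun_sort (σ : Equiv.Perm (Fin k)) (hk : 0 < k) (z : Fin k → Fin (n + 1 + Ncnt σ))
    (hz : StrictMono z) : Tuple.sort (fun i => yfun σ hk z hz (σ⁻¹ i)) = σ := by
  rw [sort_eq_iff]
  intro i h
  simp only [Equiv.Perm.coe_inv, Equiv.symm_apply_apply]
  have hc := cnt_succ σ i (by omega)
  have hzi : cnt σ i ≤ (z ⟨i, by omega⟩ : ℕ) :=
    le_trans (cnt_le_self σ i) (z_le_of_strict z hz i (by omega))
  have hcons := hz (show (⟨i, by omega⟩ : Fin k) < ⟨i + 1, h⟩ by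
    rw [Fin.lt_def]; exact Nat.lt_succ_self i)
  rw [Fin.lt_def] at hcons
  have hne : σ ⟨i, by omega⟩ ≠ σ ⟨i + 1, h⟩ := by
    intro hEq
    have := σ.injective hEq
    rw [Fin.ext_iff] at this
    simp at this
  by_cases hnd : nd σ ⟨i, by omega⟩
  · have hσlt : σ ⟨i, by omega⟩ < σ ⟨i + 1, h⟩ := by
      rcases lt_or_gt_of_ne hne with h1 | h1
      · exact h1
      · exact absurd ⟨by simpa using h, h1⟩ hnd.2
    simp only [yfun, Fin.lt_def, Fin.ext_iff, Fin.val_mk]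
    rw [hc, if_pos hnd]
    rcases Nat.lt_or_ge ((z ⟨i, by omega⟩ : ℕ) - cnt σ i)
      ((z ⟨i + 1, h⟩ : ℕ) - (cnt σ i + 1)) with h1 | h1
    · exact Or.inl h1
    · exact Or.inr ⟨by omega, hσlt⟩
  · refine Or.inl ?_
    simp only [yfun, Fin.lt_def, Fin.val_mk]
    rw [hc, if_neg hnd]
    omega

noncomputable def fiberEquiv (σ : Equiv.Perm (Fin k)) (hk : 0 < k) :
    {f : Fin k → Fin (n + 1) // Tuple.sort f = σ}
      ≃ {z : Fin k → Fin (n + 1 + Ncnt σ) // StrictMono z} where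
  toFun f := ⟨zfun σ f.1, zfun_strictMono σ f.1 f.2⟩
  invFun z := ⟨fun i => yfun σ hk z.1 z.2 (σ⁻¹ i), yfun_sort σ hk z.1 z.2⟩
  left_inv f := by
    apply Subtype.ext
    funext i
    simp only [yfun, zfun, Equiv.Perm.coe_inv, Equiv.symm_apply_apply, Fin.val_mk]
    apply Fin.ext
    simp only [Fin.val_mk]
    rw [Equiv.apply_symm_apply]
    omega
  right_inv z := by
    apply Subtype.ext
    funext i
    apply Fin.ext
    have hzi : cnt σ (i : ℕ) ≤ (z.1 i : ℕ) := by
      have := le_trans (cnt_le_self σ i) (z_le_of_strict z.1 z.2 i i.2)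
      simpa using this
    simp only [zfun, yfun, Equiv.Perm.coe_inv, Equiv.symm_apply_apply, Fin.val_mk]
    omega

lemma fiber_card (σ : Equiv.Perm (Fin k)) (hk : 0 < k) :
    Nat.card {f : Fin k → Fin (n + 1) // Tuple.sort f = σ}
      = (n + 1 + Ncnt σ).choose k := by
  rw [Nat.card_congr (fiberEquiv σ hk), card_strictMono]

lemma descentCount_eq (σ : Equiv.Perm (Fin k)) :
    descentCount σ = (univ.filter (desc σ)).card := by
  have h0 : descentCount σ = Nat.card {i : Fin k // desc σ i} := rfl
  rw [h0, Nat.card_eq_fintype_card, Fintype.card_subtype]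

lemma filter_succ_lt_card (hk : 0 < k) :
    (univ.filter fun m : Fin k => (m : ℕ) + 1 < k).card = k - 1 := by
  have he : (univ.filter fun m : Fin k => (m : ℕ) + 1 < k)
      = univ.erase ⟨k - 1, by omega⟩ := by
    ext m
    simp only [Finset.mem_filter, Finset.mem_univ, true_and, Finset.mem_erase, and_true]
    constructor
    · intro h hm
      have hv : (m : ℕ) = k - 1 := by rw [hm]
      omega
    · intro h
      have := m.2
      rcases Nat.lt_or_ge ((m : ℕ) + 1) k with h1 | h1
      · exact h1
      · exact absurd (Fin.ext (show (m : ℕ) = k - 1 by omega)) h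
  rw [he, Finset.card_erase_of_mem (Finset.mem_univ _), Finset.card_univ, Fintype.card_fin]

lemma desc_add_nd (σ : Equiv.Perm (Fin k)) (hk : 0 < k) :
    descentCount σ + Ncnt σ = k - 1 := by
  rw [descentCount_eq, Ncnt, ← filter_succ_lt_card (k := k) hk]
  rw [← Finset.card_union_of_disjoint]
  · congr 1
    ext m
    simp only [Finset.mem_union, Finset.mem_filter, Finset.mem_univ, true_and]
    constructor
    · rintro (h | h)
      · exact h.1
      · exact h.1
    · intro h
      by_cases hd : desc σ m
      · exact Or.inl hd
      · exact Or.inr ⟨h, hd⟩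
  · rw [Finset.disjoint_left]
    intro m hm hm'
    simp only [Finset.mem_filter] at hm hm'
    exact hm'.2.2 hm.2

lemma eulerian_eq (j : ℕ) :
    eulerian k j = (univ.filter fun σ : Equiv.Perm (Fin k) => descentCount σ = j).card := by
  rw [eulerian, Nat.card_eq_fintype_card]
  exact Fintype.card_subtype _

lemma worpitzky (hk : 0 < k) (n : ℕ) :
    ∑ j ∈ Finset.range k, eulerian k j * (n + k - j).choose k = (n + 1) ^ k := by
  have h1 : (n + 1) ^ k = Fintype.card (Fin k → Fin (n + 1)) := by
    rw [Fintype.card_fun, Fintype.card_fin, Fintype.card_fin]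
  have h2 : Fintype.card (Fin k → Fin (n + 1))
      = ∑ σ : Equiv.Perm (Fin k), Nat.card {f : Fin k → Fin (n + 1) // Tuple.sort f = σ} := by
    rw [Fintype.card_congr (Equiv.sigmaFiberEquiv (Tuple.sort : (Fin k → Fin (n+1)) → _)).symm,
      Fintype.card_sigma]
    exact Finset.sum_congr rfl fun σ _ => (Nat.card_eq_fintype_card).symm
  have h3 : ∀ σ : Equiv.Perm (Fin k),
      Nat.card {f : Fin k → Fin (n + 1) // Tuple.sort f = σ}
        = (n + k - descentCount σ).choose k := by
    intro σ
    rw [fiber_card σ hk]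
    congr 1
    have := desc_add_nd σ hk
    omega
  have h4 : ∀ σ : Equiv.Perm (Fin k), descentCount σ ∈ Finset.range k := by
    intro σ
    rw [Finset.mem_range]
    have := desc_add_nd σ hk
    omega
  rw [h1, h2, Finset.sum_congr rfl fun σ _ => h3 σ]
  rw [← Finset.sum_fiberwise_of_maps_to (fun σ _ => h4 σ)
    (fun σ => (n + k - descentCount σ).choose k)]
  refine Finset.sum_congr rfl fun j _ => ?_
  rw [eulerian_eq]
  have hconst : ∀ σ ∈ (univ.filter fun σ : Equiv.Perm (Fin k) => descentCount σ = j),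
      (n + k - descentCount σ).choose k = (n + k - j).choose k := fun σ hσ => by
    rw [(Finset.mem_filter.mp hσ).2]
  rw [Finset.sum_congr rfl hconst, Finset.sum_const, smul_eq_mul]

end Worpitzky

noncomputable def WPs (k : ℕ) : PowerSeries ℤ :=
  ∑ j ∈ Finset.range k, PowerSeries.C (eulerian k j : ℤ) * PowerSeries.X ^ j

lemma hWp {k : ℕ} (hk : 0 < k) :
    WPs k * (invOneSubPow ℤ (k + 1)).val = PowerSeries.mk fun n => (((n + 1) ^ k : ℕ) : ℤ) := by
  ext n
  rw [PowerSeries.coeff_mk, WPs, Finset.sum_mul, map_sum]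
  have hterm : ∀ j ∈ Finset.range k,
      (PowerSeries.coeff n) (PowerSeries.C (eulerian k j : ℤ) * PowerSeries.X ^ j
          * (invOneSubPow ℤ (k + 1)).val)
        = (eulerian k j : ℤ) * ((n + k - j).choose k : ℤ) := by
    intro j hj
    rw [Finset.mem_range] at hj
    rw [mul_assoc, PowerSeries.coeff_C_mul, PowerSeries.coeff_X_pow_mul',
      invOneSubPow_val_succ_eq_mk_add_choose]
    congr 1
    by_cases hjn : j ≤ n
    · rw [if_pos hjn, PowerSeries.coeff_mk]
      congr 2
      omega
    · rw [if_neg hjn]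
      have : n + k - j < k := by omega
      rw [Nat.choose_eq_zero_of_lt this]
      simp
  rw [Finset.sum_congr rfl hterm]
  have := worpitzky hk n
  have hcast := congrArg (Nat.cast : ℕ → ℤ) this
  push_cast at hcast ⊢
  exact hcast

lemma rescale_C' (a b : ℤ) : rescale a (PowerSeries.C b) = PowerSeries.C b := by
  ext n
  rw [PowerSeries.coeff_rescale, PowerSeries.coeff_C]
  rcases n with _ | n
  · simp
  · simp [Nat.succ_ne_zero]

lemma hW2 {k : ℕ} (hk : 0 < k) :
    WPs k = (PowerSeries.mk fun n => (((n + 1) ^ k : ℕ) : ℤ)) * (1 - X) ^ (k + 1) := by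
  have hinv : ((invOneSubPow ℤ (k + 1)).val) * (1 - X) ^ (k + 1) = 1 := by
    have h := (invOneSubPow ℤ (k + 1)).val_inv
    rwa [invOneSubPow_inv_eq_one_sub_pow] at h
  calc WPs k = WPs k * (((invOneSubPow ℤ (k + 1)).val) * (1 - X) ^ (k + 1)) := by
        rw [hinv, mul_one]
    _ = (WPs k * (invOneSubPow ℤ (k + 1)).val) * (1 - X) ^ (k + 1) := by ring
    _ = _ := by rw [hWp hk]

lemma signed {k : ℕ} (hk : 0 < k) :
    (∑ j ∈ Finset.range k, PowerSeries.C ((-1) ^ j * (eulerian k j : ℤ)) * PowerSeries.X ^ j)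
      = Gs k * (1 + X) ^ (k + 1) := by
  have h := congrArg (rescale (-1 : ℤ)) (hW2 hk)
  rw [WPs, map_sum, map_mul, map_pow, map_sub, map_one, rescale_X] at h
  have hC : PowerSeries.C (-1 : ℤ) = -1 := by
    rw [map_neg, map_one]
  rw [hC] at h
  have hterm : ∀ j ∈ Finset.range k,
      rescale (-1 : ℤ) (PowerSeries.C (eulerian k j : ℤ) * PowerSeries.X ^ j)
        = PowerSeries.C ((-1) ^ j * (eulerian k j : ℤ)) * PowerSeries.X ^ j := by
    intro j _
    rw [map_mul, map_pow, rescale_C', rescale_X, hC]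
    rw [mul_pow, ← mul_assoc]
    congr 1
    rw [map_mul, map_pow]
    simp [mul_comm]
  rw [Finset.sum_congr rfl hterm] at h
  rw [h]
  congr 1
  · rw [rescale_mk]
    rw [Gs]
    ext n
    rw [PowerSeries.coeff_mk, PowerSeries.coeff_mk]
    push_cast
    ring
  · ring

end GS

open GS in
theorem generatingSeries_Mpar (k : ℕ) (hk : 1 ≤ k) :
    ((1 : PowerSeries ℤ) +
        PowerSeries.mk fun m =>
          if m = 0 then 0 else ((∑ a, ∑ b, (Mpar k ^ (m - 1)) a b : ℕ) : ℤ)) *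
      (∑ j ∈ Finset.range k,
        PowerSeries.C ((-1) ^ j * (eulerian k j : ℤ)) * PowerSeries.X ^ (j + 1))
    = PowerSeries.X * (1 + PowerSeries.X) ^ (k + 1) := by
  have hsum : (∑ j ∈ Finset.range k,
        PowerSeries.C ((-1) ^ j * (eulerian k j : ℤ)) * PowerSeries.X ^ (j + 1))
      = (∑ j ∈ Finset.range k,
          PowerSeries.C ((-1) ^ j * (eulerian k j : ℤ)) * PowerSeries.X ^ j) * X := by
    rw [Finset.sum_mul]
    exact Finset.sum_congr rfl fun j _ => by rw [mul_assoc, ← pow_succ]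
  rw [hsum, signed hk]
  have h := R_mul_G k
  show Rs k * (Gs k * (1 + X) ^ (k + 1) * X) = X * (1 + X) ^ (k + 1)
  linear_combination (X * (1 + X) ^ (k + 1)) * h
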